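/- Let n = 2m be even, let q be an integer with 0 ≤ q ≤ m, and let 1 ≤ i ≤ n+1. For c ∈ B(n,q), one has |Γ_q^{(A)}(c)| = i if and only if max_{0≤j≤n} R(c)_j − min_{0≤j≤n} R(c)_j = i − 1 (i.e., the lattice path of c has width exactly i − 1). -/

import Mathlib

/-- The Hamming weight of a binary word `x ∈ {0,1}^N`: the number of ones. -/
def wt {N : ℕ} (x : Fin N → Bool) : ℕ :=
  (Finset.univ.filter (fun i => x i = true)).card

/-- `Flip x j` complements the first `j` bits of `x`. -/
def Flip {N : ℕ} (x : Fin N → Bool) (j : ℕ) : Fin N → Bool :=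
  fun i => if (i : ℕ) < j then !(x i) else x i

/-- The running sum `R(x)`: `R(x)₀ = 0` and `R(x)ᵢ = R(x)_{i−1} ± 1`
according to whether the `i`-th bit is `1` or `0`. -/
def RS {N : ℕ} (x : Fin N → Bool) : ℕ → ℤ
  | 0 => 0
  | i + 1 => RS x i + if h : i < N then (if x ⟨i, h⟩ then 1 else -1) else 0

/-- `Γ_q^{(A)}(c)`: the set of indices `j ∈ {0,…,2m}` such that the word
`x = Flip(c,j)` satisfies `T(x,q) ≠ ∅` and `min T(x,q) = j`. -/
def GammaA (m q : ℕ) (c : Fin (2*m) → Bool) : Set ℕ :=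
  {j | j ≤ 2*m ∧ wt (Flip (Flip c j) j) = m + q ∧
    ∀ j' ≤ 2*m, wt (Flip (Flip c j) j') = m + q → j ≤ j'}

namespace Aux7

def F {N : ℕ} (x : Fin N → Bool) : ℕ → ℤ :=
  fun i => if h : i < N then (if x ⟨i, h⟩ then 1 else -1) else 0

lemma RS_succ {N : ℕ} (x : Fin N → Bool) (j : ℕ) : RS x (j+1) = RS x j + F x j := rfl

lemma RS_eq_sum {N : ℕ} (x : Fin N → Bool) (j : ℕ) :
    RS x j = ∑ i ∈ Finset.range j, F x i := by
  induction j with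
  | zero => simp [RS]
  | succ j ih => rw [Finset.sum_range_succ, ← ih, RS_succ]

lemma F_bounds {N : ℕ} (x : Fin N → Bool) (i : ℕ) : -1 ≤ F x i ∧ F x i ≤ 1 := by
  unfold F; split <;> [skip; norm_num]
  split <;> norm_num

lemma flip_flip {N : ℕ} (x : Fin N → Bool) (j : ℕ) : Flip (Flip x j) j = x := by
  funext i; simp only [Flip]; split <;> simp

lemma F_flip_lt {N : ℕ} (x : Fin N → Bool) (j k : ℕ) (hk : k < j) :
    F (Flip x j) k = - F x k := by
  unfold F Flip
  by_cases h : k < N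
  · simp only [dif_pos h, if_pos hk]
    cases x ⟨k, h⟩ <;> simp
  · simp [h]

lemma F_flip_ge {N : ℕ} (x : Fin N → Bool) (j k : ℕ) (hk : j ≤ k) :
    F (Flip x j) k = F x k := by
  unfold F Flip
  by_cases h : k < N
  · simp only [dif_pos h, if_neg (by omega : ¬ k < j)]
  · simp [h]

lemma RS_flip_le {N : ℕ} (x : Fin N → Bool) (j j' : ℕ) (h : j' ≤ j) :
    RS (Flip x j) j' = - RS x j' := by
  induction j' with
  | zero => simp [RS]
  | succ k ih =>
    rw [RS_succ, RS_succ, ih (by omega), F_flip_lt x j k (by omega)]; ring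

lemma RS_flip_ge {N : ℕ} (x : Fin N → Bool) (j j' : ℕ) (h : j ≤ j') :
    RS (Flip x j) j' = RS x j' - 2 * RS x j := by
  induction j' with
  | zero =>
    have : j = 0 := by omega
    subst this; simp [RS]
  | succ k ih =>
    rcases Nat.lt_or_ge j (k+1) with h1 | h1
    · rw [RS_succ, RS_succ, ih (by omega), F_flip_ge x j k (by omega)]; ring
    · have : j = k + 1 := by omega
      subst this
      rw [RS_flip_le x (k+1) (k+1) le_rfl]; ring

lemma wt_int {N : ℕ} (x : Fin N → Bool) :
    (wt x : ℤ) = ∑ i : Fin N, (if x i then (1:ℤ) else 0) := by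
  rw [wt, Finset.card_filter]
  push_cast
  rfl

lemma wt_flip {N : ℕ} (x : Fin N → Bool) (j : ℕ) (hj : j ≤ N) :
    (wt (Flip x j) : ℤ) = (wt x : ℤ) - RS x j := by
  rw [wt_int, wt_int, RS_eq_sum]
  have key : ∀ i : Fin N, (if Flip x j i then (1:ℤ) else 0)
      = (if x i then (1:ℤ) else 0) - (if (i:ℕ) < j then F x (i:ℕ) else 0) := by
    intro i
    by_cases h : (i:ℕ) < j
    · simp only [Flip, F, if_pos h, dif_pos i.isLt, Fin.eta]
      cases x i <;> simp
    · simp [Flip, h]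
  rw [Finset.sum_congr rfl (fun i _ => key i), Finset.sum_sub_distrib]
  congr 1
  rw [Fin.sum_univ_eq_sum_range (fun i => if i < j then F x i else 0)]
  rw [← Finset.sum_subset (Finset.range_subset_range.2 hj)
      (fun i _ hi => by rw [if_neg (by simp at hi ⊢; omega)])]
  exact Finset.sum_congr rfl (fun i hi => by rw [if_pos (Finset.mem_range.1 hi)])


lemma wt_cond {m q : ℕ} (c : Fin (2*m) → Bool) (hc : wt c = m + q)
    (j : ℕ) (hj : j ≤ 2*m) (j' : ℕ) (hj' : j' ≤ 2*m) :
    wt (Flip (Flip c j) j') = m + q ↔ RS c j' = RS c j := by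
  have h1 : (wt (Flip (Flip c j) j') : ℤ) = (m + q : ℤ) - RS c j - RS (Flip c j) j' := by
    rw [wt_flip (Flip c j) j' hj', wt_flip c j hj, hc]; push_cast; ring
  constructor
  · intro h
    have h2 : (wt (Flip (Flip c j) j') : ℤ) = (m + q : ℤ) := by rw [h]; push_cast; ring
    rw [h1] at h2
    rcases Nat.le_total j' j with hle | hle
    · rw [RS_flip_le c j j' hle] at h2; omega
    · rw [RS_flip_ge c j j' hle] at h2; omega
  · intro h
    have h2 : (wt (Flip (Flip c j) j') : ℤ) = (m + q : ℤ) := by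
      rw [h1]
      rcases Nat.le_total j' j with hle | hle
      · rw [RS_flip_le c j j' hle, h]; ring
      · rw [RS_flip_ge c j j' hle, h]; ring
    exact_mod_cast h2

lemma gamma_char {m q : ℕ} (c : Fin (2*m) → Bool) (hc : wt c = m + q) :
    GammaA m q c = {j | j ≤ 2*m ∧ ∀ j' ≤ 2*m, RS c j' = RS c j → j ≤ j'} := by
  ext j
  simp only [GammaA, Set.mem_setOf_eq]
  constructor
  · rintro ⟨hj, -, h3⟩
    exact ⟨hj, fun j' hj' he => h3 j' hj' ((wt_cond c hc j hj j' hj').2 he)⟩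
  · rintro ⟨hj, h⟩
    refine ⟨hj, by rw [flip_flip]; exact hc, fun j' hj' hw => h j' hj' ((wt_cond c hc j hj j' hj').1 hw)⟩

lemma ivt_up (f : ℕ → ℤ) (hstep : ∀ j, f (j+1) ≤ f j + 1) :
    ∀ (d k : ℕ) (v : ℤ), f k ≤ v → v ≤ f (k+d) → ∃ j, k ≤ j ∧ j ≤ k + d ∧ f j = v := by
  intro d
  induction d with
  | zero => intro k v h1 h2; exact ⟨k, le_rfl, le_rfl, le_antisymm h1 (by simpa using h2)⟩
  | succ d ih =>
    intro k v h1 h2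
    by_cases he : f k = v
    · exact ⟨k, le_rfl, by omega, he⟩
    · have hk1 : f (k+1) ≤ v := by have := hstep k; omega
      have h2' : v ≤ f (k+1+d) := by rwa [show k+1+d = k+(d+1) by omega]
      obtain ⟨j, hj1, hj2, hj3⟩ := ih (k+1) v hk1 h2'
      exact ⟨j, by omega, by omega, hj3⟩

lemma ivt (f : ℕ → ℤ) (hstep : ∀ j, f (j+1) ≤ f j + 1 ∧ f j - 1 ≤ f (j+1))
    (k l : ℕ) (v : ℤ) (h1 : f k ≤ v) (h2 : v ≤ f l) :
    ∃ j, j ≤ max k l ∧ f j = v := by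
  rcases Nat.le_total k l with h | h
  · obtain ⟨j, _, hj2, hj3⟩ := ivt_up f (fun j => (hstep j).1) (l - k) k v h1
      (by rwa [show k + (l-k) = l by omega])
    exact ⟨j, by omega, hj3⟩
  · obtain ⟨j, _, hj2, hj3⟩ := ivt_up (fun t => -f t)
      (fun j => show -f (j+1) ≤ -f j + 1 by have := (hstep j).2; omega)
      (k - l) l (-v) (show -f l ≤ -v by omega)
      (show -v ≤ -f (l + (k-l)) by rw [show l + (k-l) = k by omega]; omega)
    have hj3' : -f j = -v := hj3
    exact ⟨j, by omega, by omega⟩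



end Aux7

/-- for `c ∈ B(n,q)` and `1 ≤ i ≤ n+1`, `|Γ_q^{(A)}(c)| = i` iff
`max_{0≤j≤n} R(c)_j − min_{0≤j≤n} R(c)_j = i − 1`. -/
theorem stmt7 (m q : ℕ) (hq : q ≤ m) (i : ℕ) (hi1 : 1 ≤ i) (hi2 : i ≤ 2*m + 1)
    (c : Fin (2*m) → Bool) (hc : wt c = m + q) :
    Set.ncard (GammaA m q c) = i ↔
    ∃ a b : ℤ, (∀ j ≤ 2*m, a ≤ RS c j ∧ RS c j ≤ b) ∧
      (∃ j ≤ 2*m, RS c j = a) ∧ (∃ j ≤ 2*m, RS c j = b) ∧ b - a = (i : ℤ) - 1 := by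
  set f : ℕ → ℤ := RS c with hf
  set J : Finset ℕ := Finset.range (2*m+1) with hJ
  set Gf : Finset ℕ := J.filter (fun j => ∀ j' ∈ J, f j' = f j → j ≤ j') with hGf
  -- GammaA is the coe of Gf
  have hset : GammaA m q c = ↑Gf := by
    rw [Aux7.gamma_char c hc]
    ext j
    simp only [hGf, Finset.coe_filter, Set.mem_setOf_eq, Finset.mem_range, hJ,
      Nat.lt_succ_iff, hf]
  have hncard : Set.ncard (GammaA m q c) = Gf.card := by
    rw [hset, Set.ncard_coe_finset]
  -- card of Gf equals card of image
  have himg : Gf.image f = J.image f := by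
    apply Finset.Subset.antisymm
    · exact Finset.image_subset_image (Finset.filter_subset _ _)
    · intro v hv
      obtain ⟨j0, hj0, rfl⟩ := Finset.mem_image.1 hv
      set S : Finset ℕ := J.filter (fun j => f j = f j0) with hS
      have hne : S.Nonempty := ⟨j0, by simp [hS, hj0]⟩
      set j1 := S.min' hne with hj1
      have hj1S : j1 ∈ S := S.min'_mem hne
      have hj1J : j1 ∈ J := (Finset.mem_filter.1 hj1S).1
      have hj1f : f j1 = f j0 := (Finset.mem_filter.1 hj1S).2
      refine Finset.mem_image.2 ⟨j1, ?_, hj1f⟩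
      refine Finset.mem_filter.2 ⟨hj1J, fun j' hj' he => ?_⟩
      exact S.min'_le j' (Finset.mem_filter.2 ⟨hj', by rw [he, hj1f]⟩)
  have hinj : Set.InjOn f ↑Gf := by
    intro j1 h1 j2 h2 he
    simp only [Finset.coe_filter, Set.mem_setOf_eq, hGf] at h1 h2
    exact le_antisymm (h1.2 j2 h2.1 he.symm) (h2.2 j1 h1.1 he)
  have hcard : Gf.card = (J.image f).card := by
    rw [← himg, Finset.card_image_of_injOn hinj]
  -- min and max of the image
  have hJne : (J.image f).Nonempty := ⟨f 0, Finset.mem_image.2 ⟨0, by simp [hJ], rfl⟩⟩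
  set a := (J.image f).min' hJne with ha
  set b := (J.image f).max' hJne with hb
  have hmemJ : ∀ j ≤ 2*m, f j ∈ J.image f := fun j hj =>
    Finset.mem_image.2 ⟨j, by simp [hJ]; omega, rfl⟩
  have hbounds : ∀ j ≤ 2*m, a ≤ f j ∧ f j ≤ b := fun j hj =>
    ⟨(J.image f).min'_le _ (hmemJ j hj), (J.image f).le_max' _ (hmemJ j hj)⟩
  obtain ⟨ja, hjaJ, hjaf⟩ := Finset.mem_image.1 ((J.image f).min'_mem hJne)
  obtain ⟨jb, hjbJ, hjbf⟩ := Finset.mem_image.1 ((J.image f).max'_mem hJne)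
  rw [← ha] at hjaf
  rw [← hb] at hjbf
  have hjale : ja ≤ 2*m := by simpa [hJ, Nat.lt_succ_iff] using hjaJ
  have hjble : jb ≤ 2*m := by simpa [hJ, Nat.lt_succ_iff] using hjbJ
  have hstep : ∀ j, f (j+1) ≤ f j + 1 ∧ f j - 1 ≤ f (j+1) := by
    intro j
    have h1 := Aux7.RS_succ c j
    have h2 := Aux7.F_bounds c j
    constructor <;> simp only [hf] <;> omega
  -- image is Icc a b
  have hicc : J.image f = Finset.Icc a b := by
    apply Finset.Subset.antisymm
    · intro v hv
      obtain ⟨j, hjJ, rfl⟩ := Finset.mem_image.1 hv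
      exact Finset.mem_Icc.2 ⟨(J.image f).min'_le _ hv, (J.image f).le_max' _ hv⟩
    · intro v hv
      rw [Finset.mem_Icc] at hv
      obtain ⟨j, hjle, hjf⟩ := Aux7.ivt f hstep ja jb v (by rw [hjaf]; exact hv.1)
        (by rw [hjbf]; exact hv.2)
      exact Finset.mem_image.2 ⟨j, by simp [hJ]; omega, hjf⟩
  have hab : a ≤ b := ((hbounds 0 (by omega)).1).trans (hbounds 0 (by omega)).2
  have hcard2 : Gf.card = (b + 1 - a).toNat := by
    rw [hcard, hicc, Int.card_Icc]
  rw [hncard, hcard2]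
  constructor
  · intro h
    refine ⟨a, b, hbounds, ⟨ja, hjale, hjaf⟩, ⟨jb, hjble, hjbf⟩, ?_⟩
    omega
  · rintro ⟨a', b', hb', ⟨j1, hj1, hf1⟩, ⟨j2, hj2, hf2⟩, hd⟩
    have ha' : a = a' := by
      have h1 : a ≤ a' := by rw [← hf1]; exact (hbounds j1 hj1).1
      have h2 : a' ≤ a := by rw [← hjaf]; exact (hb' ja hjale).1
      omega
    have hb'' : b = b' := by
      have h1 : b' ≤ b := by rw [← hf2]; exact (hbounds j2 hj2).2
      have h2 : b ≤ b' := by rw [← hjbf]; exact (hb' jb hjble).2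
      omega
    omega
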